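/- Let p be an odd prime, let R be the quotient ring (ℤ/pℤ)[X]/(X² − X − 1) (e.g., AdjoinRoot of the polynomial X² − X − 1 over ℤ/pℤ) and let r ∈ R denote the image of X. Then for every integer n, the matrix (A₂ mod p)^n is the identity matrix over ℤ/pℤ if and only if r^(2n) = 1 in R. (Here r² = r + 1 is the image of the fundamental unit (3+√5)/2 = ((1+√5)/2)² of ℤ[(1+√5)/2] reduced mod p.) -/

import Mathlib

open Polynomial

/-- The coloring matrix `A_{σ₁σ₂⁻¹}` of the 3-braid `σ₁σ₂⁻¹`, reduced modulo `p`. -/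
def A₂modp (p : ℕ) : Matrix (Fin 3) (Fin 3) (ZMod p) := !![0, 1, 0; -2, 4, -1; -1, 2, 0]

namespace A2aux

def Pm (p : ℕ) : Matrix (Fin 3) (Fin 3) (ZMod p) := !![1,1,0;1,1,1;1,0,1]
def Qm (p : ℕ) : Matrix (Fin 3) (Fin 3) (ZMod p) := !![1,-1,1;0,1,-1;-1,1,0]
def Bm (p : ℕ) : Matrix (Fin 3) (Fin 3) (ZMod p) := !![1,0,0;0,1,1;0,1,2]

lemma PQ (p : ℕ) : Pm p * Qm p = 1 := by
  rw [Pm, Qm, Matrix.mul_fin_three, Matrix.one_fin_three]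
  norm_num

lemma QP (p : ℕ) : Qm p * Pm p = 1 := by
  rw [Pm, Qm, Matrix.mul_fin_three, Matrix.one_fin_three]
  norm_num

lemma conj (p : ℕ) : A₂modp p = Pm p * Bm p * Qm p := by
  simp [Pm, Qm, Bm, A₂modp, Matrix.mul_fin_three]
  norm_num

lemma conj_pow (p : ℕ) (m : ℕ) : (A₂modp p) ^ m = Pm p * (Bm p) ^ m * Qm p := by
  induction m with
  | zero => simp [PQ]
  | succ m ih =>
      rw [pow_succ, ih, conj, pow_succ]
      rw [show Pm p * Bm p ^ m * Qm p * (Pm p * Bm p * Qm p)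
        = Pm p * Bm p ^ m * (Qm p * Pm p) * Bm p * Qm p by
          simp only [Matrix.mul_assoc], QP]
      simp only [Matrix.mul_one, Matrix.mul_assoc]

lemma pow_eq_one_iff (p : ℕ) (m : ℕ) : (A₂modp p) ^ m = 1 ↔ (Bm p) ^ m = 1 := by
  rw [conj_pow]
  constructor
  · intro h
    calc (Bm p) ^ m = Qm p * Pm p * (Bm p) ^ m * (Qm p * Pm p) := by
          rw [QP]; simp
      _ = Qm p * (Pm p * (Bm p) ^ m * Qm p) * Pm p := by
          simp only [Matrix.mul_assoc]
      _ = 1 := by rw [h, Matrix.mul_one, QP]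
  · intro h
    rw [h, Matrix.mul_one, PQ]

/-- The master induction: `Bm^m` has the block shape coming from `r^{2m} = a + b r`. -/
lemma key (p : ℕ) (m : ℕ) :
    ∃ a b : ZMod p,
      (Bm p) ^ m = !![1,0,0;0,a,b;0,b,a+b] ∧
      (AdjoinRoot.root ((X : Polynomial (ZMod p)) ^ 2 - X - 1)) ^ (2 * m)
        = AdjoinRoot.of _ a + AdjoinRoot.of _ b *
            AdjoinRoot.root ((X : Polynomial (ZMod p)) ^ 2 - X - 1) := by
  set f : Polynomial (ZMod p) := X ^ 2 - X - 1 with hf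
  set r := AdjoinRoot.root f with hr
  have hr2 : r ^ 2 = r + 1 := by
    have h0 : f.eval₂ (AdjoinRoot.of f) r = 0 := AdjoinRoot.eval₂_root f
    simp only [hf, eval₂_sub, eval₂_pow, eval₂_X, eval₂_one] at h0
    linear_combination h0
  induction m with
  | zero =>
      refine ⟨1, 0, ?_, ?_⟩
      · ext i j
        fin_cases i <;> fin_cases j <;>
          simp [Matrix.one_apply, Matrix.vecHead, Matrix.vecTail]
      · simp
  | succ m ih =>
      obtain ⟨a, b, hB, hR⟩ := ih
      refine ⟨a + b, a + 2 * b, ?_, ?_⟩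
      · rw [pow_succ, hB]
        ext i j
        fin_cases i <;> fin_cases j <;>
          simp [Bm, Matrix.mul_apply, Fin.sum_univ_three, Matrix.vecHead, Matrix.vecTail] <;> ring
      · have h1 : r ^ (2 * (m + 1)) = r ^ (2 * m) * r ^ 2 := by ring
        rw [h1, hR, map_add, map_add, map_mul, map_ofNat]
        linear_combination r ^ 2 * hR - hR * r^2 +
          (AdjoinRoot.of f a + AdjoinRoot.of f b + AdjoinRoot.of f b * r) * hr2

lemma coeff_unique (p : ℕ) (hp : p.Prime) (a b : ZMod p)
    (h : AdjoinRoot.of ((X : Polynomial (ZMod p)) ^ 2 - X - 1) a +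
         AdjoinRoot.of _ b * AdjoinRoot.root ((X : Polynomial (ZMod p)) ^ 2 - X - 1) = 1) :
    a = 1 ∧ b = 0 := by
  haveI : Fact p.Prime := ⟨hp⟩
  set f : Polynomial (ZMod p) := X ^ 2 - X - 1 with hf
  have hmk : AdjoinRoot.mk f (C a + C b * X - 1) = 0 := by
    simp only [map_sub, map_add, map_mul, AdjoinRoot.mk_X, AdjoinRoot.mk_C, map_one]
    rw [h]; ring
  rw [AdjoinRoot.mk_eq_zero] at hmk
  have hdeg : (C a + C b * X - 1 : Polynomial (ZMod p)).degree < f.degree := by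
    have hdf : f.degree = 2 := by
      rw [hf]
      compute_degree!
    rw [hdf]
    calc (C a + C b * X - 1 : Polynomial (ZMod p)).degree
        ≤ 1 := by
          apply le_trans (degree_sub_le _ _)
          simp only [max_le_iff]
          refine ⟨le_trans (degree_add_le _ _) ?_, ?_⟩
          · simp only [max_le_iff]
            constructor
            · exact le_trans (degree_C_le) (by norm_num)
            · calc (C b * X : Polynomial (ZMod p)).degree
                    ≤ (C b : Polynomial (ZMod p)).degree + (X : Polynomial (ZMod p)).degree :=
                      degree_mul_le _ _
                _ ≤ 0 + 1 := add_le_add degree_C_le (le_of_eq degree_X)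
                _ = 1 := by norm_num
          · exact le_trans degree_one_le (by norm_num)
      _ < 2 := by norm_num
  have hz := Polynomial.eq_zero_of_dvd_of_degree_lt hmk hdeg
  have h0 := congrArg (fun q => Polynomial.coeff q 0) hz
  have h1 := congrArg (fun q => Polynomial.coeff q 1) hz
  simp [coeff_add, coeff_C, coeff_C_mul, coeff_X, coeff_one, sub_eq_zero] at h0 h1
  exact ⟨by linear_combination h0, h1⟩

lemma detA (p : ℕ) : IsUnit (A₂modp p).det := by
  have : (A₂modp p).det = 1 := by
    simp [A₂modp, Matrix.det_fin_three]
  rw [this]; exact isUnit_one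

end A2aux

/-- For an odd prime `p`, let `R = (ℤ/pℤ)[X]/(X² - X - 1)` and let `r` be the image
of `X` (a unit of `R`, presented here as a unit `u` with underlying element `r`).
Then for every integer `n`, `(A₂ mod p) ^ n = 1` iff `r ^ (2n) = 1` in `R`. -/
theorem A₂modp_zpow_eq_one_iff (p : ℕ) (hp : p.Prime) (hodd : Odd p)
    (u : (AdjoinRoot ((X : Polynomial (ZMod p)) ^ 2 - X - 1))ˣ)
    (hu : (u : AdjoinRoot ((X : Polynomial (ZMod p)) ^ 2 - X - 1)) =
      AdjoinRoot.root ((X : Polynomial (ZMod p)) ^ 2 - X - 1))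
    (n : ℤ) :
    (A₂modp p) ^ n = 1 ↔ u ^ (2 * n) = 1 := by
  haveI : Fact p.Prime := ⟨hp⟩
  -- The natural-number case
  have natcase : ∀ m : ℕ, (A₂modp p) ^ m = 1 ↔ u ^ (2 * m) = 1 := by
    intro m
    obtain ⟨a, b, hB, hR⟩ := A2aux.key p m
    rw [A2aux.pow_eq_one_iff, hB]
    constructor
    · intro h
      have ha : a = 1 := by
        have := congrFun (congrFun h 1) 1
        simpa [Matrix.one_apply] using this
      have hb : b = 0 := by
        have := congrFun (congrFun h 1) 2
        simpa [Matrix.one_apply] using this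
      ext
      rw [Units.val_pow_eq_pow_val, hu, hR, ha, hb]
      simp
    · intro h
      have h' : (u : AdjoinRoot ((X : Polynomial (ZMod p)) ^ 2 - X - 1)) ^ (2 * m) = 1 := by
        rw [← Units.val_pow_eq_pow_val, h]; rfl
      rw [hu, hR] at h'
      obtain ⟨ha, hb⟩ := A2aux.coeff_unique p hp a b h'
      subst ha; subst hb
      ext i j
      fin_cases i <;> fin_cases j <;>
        simp [Matrix.one_apply, Matrix.vecHead, Matrix.vecTail]
  cases n with
  | ofNat m =>
      have := natcase m
      rw [Int.ofNat_eq_coe, zpow_natCast]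
      rw [show (2 * (m : ℤ)) = ((2 * m : ℕ) : ℤ) by push_cast; ring, zpow_natCast]
      exact this
  | negSucc m =>
      have := natcase (m + 1)
      have hmat : (A₂modp p) ^ (Int.negSucc m) = ((A₂modp p) ^ (m + 1))⁻¹ := by
        rw [show (Int.negSucc m) = -((m + 1 : ℕ) : ℤ) by simp [Int.negSucc_eq]]
        exact Matrix.zpow_neg_natCast _ _
      have hdet : IsUnit ((A₂modp p) ^ (m + 1)).det := by
        rw [Matrix.det_pow]
        exact (A2aux.detA p).pow _
      rw [hmat]
      rw [show (2 * (Int.negSucc m)) = -((2 * (m + 1) : ℕ) : ℤ) by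
        rw [Int.negSucc_eq]; push_cast; ring]
      rw [zpow_neg, zpow_natCast, inv_eq_one]
      rw [← this]
      constructor
      · intro h
        have := congrArg (fun M => M⁻¹) h
        simpa [Matrix.nonsing_inv_nonsing_inv _ hdet] using this
      · intro h
        rw [h, inv_one]
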